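/- arXiv:2401.09346 — 4 statements merged into one kernel-verified Lean document; each statement's English description precedes it below -/
import Mathlib

section
/- Let {a_i}_{i≥1} be a nonnegative sequence satisfying a_i ≤ (1 - c·η_i) a_{i-1} + C·η_i² for all i ≥ 1, where η_i = η·i^{-β} with β ∈ (1/2, 1), η > 0, c > 0, C > 0, and c·η_i < 1 for all i. Then there is a constant M (depending on c, C, η, β, a₀) such that a_n ≤ M·n^{-β} for all n ≥ 1. -/
open MeasureTheory ProbabilityTheory Real
open scoped ENNReal NNReal RealInnerProductSpace

/-- Density of the Student t-distribution with `m` degrees of freedom. -/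
noncomputable def studentTPDF (m : ℝ) (x : ℝ) : ℝ :=
  (Real.Gamma ((m + 1) / 2) / (Real.sqrt (m * Real.pi) * Real.Gamma (m / 2))) *
    (1 + x ^ 2 / m) ^ (-(m + 1) / 2)

/-- The Student t-distribution with `m` degrees of freedom as a measure on `ℝ`. -/
noncomputable def studentTMeasure (m : ℝ) : Measure ℝ :=
  volume.withDensity fun x => ENNReal.ofReal (studentTPDF m x)

lemma key_ineq (β : ℝ) (hβ0 : 0 < β) (hβ1 : β ≤ 1) {x : ℝ} (hx : 1 ≤ x) :
    x ^ (-β) - β * x ^ (-(β+1)) ≤ (x+1) ^ (-β) := by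
  have hx0 : (0:ℝ) < x := lt_of_lt_of_le one_pos hx
  have hx1 : (0:ℝ) < x + 1 := by linarith
  have hsplit : x ^ (-(β+1)) = x ^ (-β) * x⁻¹ := by
    rw [show -(β+1) = -β + (-1) by ring, rpow_add hx0, rpow_neg_one]
  have hfac : x ^ (-β) - β * x ^ (-(β+1)) = x ^ (-β) * (1 - β/x) := by
    rw [hsplit]; ring
  have hb : (1 + 1/x) ^ β ≤ 1 + β * (1/x) := by
    have h1x : (0:ℝ) < 1/x := by positivity
    exact rpow_one_add_le_one_add_mul_self (by linarith) hβ0.le hβ1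
  have h1 : (x+1) ^ β ≤ x ^ β * (1 + β/x) := by
    have : (x + 1) = x * (1 + 1/x) := by field_simp
    rw [this, mul_rpow hx0.le (by positivity)]
    calc x ^ β * (1 + 1/x) ^ β ≤ x ^ β * (1 + β * (1/x)) := by
          exact mul_le_mul_of_nonneg_left hb (rpow_nonneg hx0.le β)
      _ = x ^ β * (1 + β/x) := by ring
  rw [rpow_neg hx1.le, ← one_div, le_div_iff₀ (rpow_pos_of_pos hx1 β), hfac]
  have hnn : 0 ≤ x ^ (-β) * (1 - β/x) := by
    apply mul_nonneg (rpow_nonneg hx0.le _)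
    have : β / x ≤ 1 := by rw [div_le_one hx0]; linarith
    linarith
  calc x ^ (-β) * (1 - β/x) * (x+1) ^ β
      ≤ x ^ (-β) * (1 - β/x) * (x ^ β * (1 + β/x)) := by
        exact mul_le_mul_of_nonneg_left h1 hnn
    _ = (x ^ (-β) * x ^ β) * ((1 - β/x) * (1 + β/x)) := by ring
    _ = 1 * (1 - (β/x)^2) := by
        rw [← rpow_add hx0]; simp; ring
    _ ≤ 1 := by nlinarith [sq_nonneg (β/x)]

theorem stmt4 (β η c C : ℝ) (hβ : β ∈ Set.Ioo (1/2 : ℝ) 1) (hη : 0 < η)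
    (hc : 0 < c) (hC : 0 < C)
    (a : ℕ → ℝ) (ha : ∀ i, 0 ≤ a i)
    (hstep : ∀ i : ℕ, 1 ≤ i → c * (η * (i : ℝ) ^ (-β)) < 1)
    (hrec : ∀ i : ℕ, 1 ≤ i →
      a i ≤ (1 - c * (η * (i : ℝ) ^ (-β))) * a (i - 1) + C * (η * (i : ℝ) ^ (-β)) ^ 2) :
    ∃ M : ℝ, ∀ n : ℕ, 1 ≤ n → a n ≤ M * (n : ℝ) ^ (-β) := by
  obtain ⟨hβ1, hβ2⟩ := hβ
  have hβ0 : 0 < β := by linarith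
  set ε : ℝ := c * η with hεdef
  have hε : 0 < ε := mul_pos hc hη
  set K : ℝ := ε / ((2:ℝ) ^ (β+2) * β) with hKdef
  have h2pos : (0:ℝ) < (2:ℝ) ^ (β+2) := rpow_pos_of_pos two_pos _
  have hK : 0 < K := div_pos hε (mul_pos h2pos hβ0)
  -- choose threshold N
  have htend : Filter.Tendsto (fun n : ℕ => (n:ℝ) ^ (β-1)) Filter.atTop (nhds 0) := by
    have h1 : Filter.Tendsto (fun x : ℝ => x ^ (-(1-β))) Filter.atTop (nhds 0) :=
      tendsto_rpow_neg_atTop (by linarith)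
    have h2 := h1.comp (tendsto_natCast_atTop_atTop (R := ℝ))
    simpa [Function.comp_def, neg_sub] using h2
  have hev : ∀ᶠ n : ℕ in Filter.atTop, (n:ℝ) ^ (β-1) < K :=
    htend.eventually (gt_mem_nhds hK)
  obtain ⟨N, hN⟩ := Filter.eventually_atTop.mp hev
  set N₀ : ℕ := max N 2 with hN₀def
  have hN₀2 : 2 ≤ N₀ := le_max_right _ _
  -- the constant
  have hne : (Finset.Icc 1 N₀).Nonempty := ⟨1, by simp [Finset.mem_Icc]; omega⟩
  set M₁ : ℝ := (Finset.Icc 1 N₀).sup' hne (fun n => a n * (n:ℝ) ^ β) with hM₁def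
  set M : ℝ := max (2 * C * η / c) M₁ with hMdef
  have hM0 : 0 ≤ M := le_trans (by positivity) (le_max_left _ _)
  have hMc : C * η ^ 2 ≤ M * (ε/2) := by
    have h1 : 2 * C * η / c ≤ M := le_max_left _ _
    have : (2 * C * η / c) * (ε/2) = C * η ^ 2 := by
      field_simp [hεdef]; ring
    calc C * η ^ 2 = (2 * C * η / c) * (ε/2) := this.symm
      _ ≤ M * (ε/2) := by
          apply mul_le_mul_of_nonneg_right h1 (by positivity)
  -- base case: n ≤ N₀
  have hbase : ∀ n : ℕ, 1 ≤ n → n ≤ N₀ → a n ≤ M * (n:ℝ) ^ (-β) := by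
    intro n hn1 hnN
    have hn0 : (0:ℝ) < (n:ℝ) := by exact_mod_cast hn1
    have hsup : a n * (n:ℝ) ^ β ≤ M₁ :=
      Finset.le_sup' (f := fun n => a n * (n:ℝ) ^ β) (by simp [Finset.mem_Icc]; omega)
    have hM₁M : M₁ ≤ M := le_max_right _ _
    have hpow : (n:ℝ) ^ β * (n:ℝ) ^ (-β) = 1 := by
      rw [← rpow_add hn0]; simp
    have := mul_le_mul_of_nonneg_right (hsup.trans hM₁M) (rpow_nonneg hn0.le (-β))
    calc a n = a n * ((n:ℝ) ^ β * (n:ℝ) ^ (-β)) := by rw [hpow, mul_one]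
      _ = a n * (n:ℝ) ^ β * (n:ℝ) ^ (-β) := by ring
      _ ≤ M * (n:ℝ) ^ (-β) := this
  -- main induction
  refine ⟨M, ?_⟩
  intro n
  induction n using Nat.strong_induction_on with
  | _ n ih =>
    intro hn1
    by_cases hnN : n ≤ N₀
    · exact hbase n hn1 hnN
    · push_neg at hnN
      have hn3 : 3 ≤ n := by omega
      have ihp : a (n-1) ≤ M * ((n-1 : ℕ):ℝ) ^ (-β) := ih (n-1) (by omega) (by omega)
      have hcast : ((n-1 : ℕ):ℝ) = (n:ℝ) - 1 := by
        push_cast [Nat.cast_sub (by omega : 1 ≤ n)]; ring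
      set x : ℝ := (n:ℝ) with hxdef
      have hx3 : (3:ℝ) ≤ x := by rw [hxdef]; exact_mod_cast hn3
      have hx0 : (0:ℝ) < x := by linarith
      have hxm1 : (1:ℝ) ≤ x - 1 := by linarith
      have hxm0 : (0:ℝ) < x - 1 := by linarith
      rw [hcast] at ihp
      set y : ℝ := x ^ (-β) with hydef
      set z : ℝ := (x-1) ^ (-β) with hzdef
      set w : ℝ := (x-1) ^ (-(β+1)) with hwdef
      have hy0 : 0 ≤ y := rpow_nonneg hx0.le _
      have hw0 : 0 ≤ w := rpow_nonneg hxm0.le _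
      -- P1 : z ≤ y + β * w
      have P1 : z ≤ y + β * w := by
        have := key_ineq β hβ0 hβ2.le hxm1
        have hxx : x - 1 + 1 = x := by ring
        rw [hxx] at this
        linarith
      -- P2 : y ≤ z
      have P2 : y ≤ z := rpow_le_rpow_of_nonpos hxm0 (by linarith) (by linarith)
      -- P3 : β * w ≤ (ε/2) * y^2
      have P3 : β * w ≤ (ε/2) * y^2 := by
        have hQ1 : w ≤ (x/2) ^ (-(β+1)) :=
          rpow_le_rpow_of_nonpos (by linarith) (by linarith) (by linarith)
        have hQ2 : (x/2) ^ (-(β+1)) = (2:ℝ) ^ (β+1) * x ^ (-(β+1)) := by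
          rw [div_rpow hx0.le (by norm_num),
            show ((2:ℝ)) ^ (-(β+1)) = ((2:ℝ) ^ (β+1))⁻¹ from rpow_neg (by norm_num) _]
          field_simp
        have hQ3 : x ^ (-(β+1)) = x ^ (β-1) * y^2 := by
          rw [hydef, sq, ← rpow_add hx0, ← rpow_add hx0]
          ring_nf
        have hQ4 : x ^ (β-1) < K := hN n (by omega)
        have h2b : (0:ℝ) < (2:ℝ) ^ (β+1) := rpow_pos_of_pos two_pos _
        have hKval : β * ((2:ℝ) ^ (β+1) * K) = ε/2 := by
          rw [hKdef]
          have h22 : (2:ℝ) ^ (β+2) = (2:ℝ) ^ (β+1) * 2 := by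
            rw [show β + 2 = (β+1) + 1 by ring, rpow_add two_pos, rpow_one]
          rw [h22]
          field_simp
        have hxK : x ^ (-(β+1)) ≤ K * y^2 := by
          rw [hQ3]
          exact mul_le_mul_of_nonneg_right hQ4.le (sq_nonneg y)
        calc β * w ≤ β * ((2:ℝ) ^ (β+1) * x ^ (-(β+1))) := by
              rw [← hQ2]; exact mul_le_mul_of_nonneg_left hQ1 hβ0.le
          _ ≤ β * ((2:ℝ) ^ (β+1) * (K * y^2)) := by
              apply mul_le_mul_of_nonneg_left _ hβ0.le
              exact mul_le_mul_of_nonneg_left hxK h2b.le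
          _ = β * ((2:ℝ) ^ (β+1) * K) * y^2 := by ring
          _ = (ε/2) * y^2 := by rw [hKval]
      -- recursion step
      have hrecn := hrec n (by omega)
      have hε1 : 0 ≤ 1 - c * (η * y) := by
        have := hstep n (by omega)
        rw [← hxdef, ← hydef] at this
        linarith
      rw [← hxdef, ← hydef] at hrecn
      have hεy : c * (η * y) = ε * y := by rw [hεdef]; ring
      have step1 : a n ≤ (1 - ε * y) * (M * z) + C * η^2 * y^2 := by
        have h1 : (1 - c * (η * y)) * a (n-1) ≤ (1 - c * (η * y)) * (M * z) :=
          mul_le_mul_of_nonneg_left ihp hε1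
        calc a n ≤ (1 - c * (η * y)) * a (n-1) + C * (η * y)^2 := hrecn
          _ ≤ (1 - c * (η * y)) * (M * z) + C * (η * y)^2 := by linarith
          _ = (1 - ε * y) * (M * z) + C * η^2 * y^2 := by rw [hεdef]; ring
      have hεy0 : 0 ≤ 1 - ε * y := by rw [← hεy]; exact hε1
      clear hrec hstep hrecn ha ih hbase hev htend hN hεy hε1 ihp
      clear_value x y z w M M₁ K N₀ ε
      have step2 : (1 - ε * y) * (M * z) + C * η^2 * y^2 ≤ M * y := by
        have hA : (1 - ε * y) * (M * z) ≤ (1 - ε * y) * (M * (y + β * w)) := by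
          apply mul_le_mul_of_nonneg_left _ hεy0
          exact mul_le_mul_of_nonneg_left P1 hM0
        have hB : M * (β * w) ≤ M * ((ε/2) * y^2) := mul_le_mul_of_nonneg_left P3 hM0
        have hCb : C * η^2 * y^2 ≤ M * (ε/2) * y^2 :=
          mul_le_mul_of_nonneg_right hMc (sq_nonneg y)
        have hD : 0 ≤ (ε * y) * (M * (β * w)) := by positivity
        nlinarith [hA, hB, hCb, hD]
      linarith
end

section
/- For β ∈ (1/2, 1), η > 0, κ > 0, and η_l = η·l^{-β}, define D_k = η_k · ∑_{i=k}^{n} ∏_{l=k+1}^{i} (1 - η_l κ) for 1 ≤ k ≤ n (with the empty product equal to 1), assuming η_l κ < 1 for all l. Then there exists a constant C (independent of n) with ∑_{k=1}^{n} D_k² ≤ C·n. -/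
open MeasureTheory ProbabilityTheory Real
open scoped ENNReal NNReal RealInnerProductSpace

noncomputable def stmt5S (β η κ : ℝ) (n k : ℕ) : ℝ :=
  ∑ i ∈ Finset.Icc k n, ∏ l ∈ Finset.Icc (k + 1) i, (1 - η * (l : ℝ) ^ (-β) * κ)

section aux
variable {β η κ : ℝ} (hβ : β ∈ Set.Ioo (1/2 : ℝ) 1) (hη : 0 < η) (hκ : 0 < κ)
  (hstep : ∀ l : ℕ, 1 ≤ l → η * (l : ℝ) ^ (-β) * κ < 1)

include hη hκ in
lemma stmt5_factor_le_one (l : ℕ) : (1 - η * (l : ℝ) ^ (-β) * κ) ≤ 1 := by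
  have h1 : 0 ≤ η * (l : ℝ) ^ (-β) * κ := by positivity
  linarith

include hstep in
lemma stmt5_factor_pos {l : ℕ} (hl : 1 ≤ l) : 0 < 1 - η * (l : ℝ) ^ (-β) * κ := by
  have := hstep l hl; linarith

include hstep in
lemma stmt5_prod_nonneg {k i : ℕ} :
    0 ≤ ∏ l ∈ Finset.Icc (k + 1) i, (1 - η * (l : ℝ) ^ (-β) * κ) := by
  apply Finset.prod_nonneg
  intro l hl
  have hl1 : 1 ≤ l := by have := (Finset.mem_Icc.mp hl).1; omega
  exact (stmt5_factor_pos hstep hl1).le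

include hη hκ hstep in
lemma stmt5_prod_le_one {k i : ℕ} :
    ∏ l ∈ Finset.Icc (k + 1) i, (1 - η * (l : ℝ) ^ (-β) * κ) ≤ 1 := by
  apply Finset.prod_le_one
  · intro l hl
    have hl1 : 1 ≤ l := by have := (Finset.mem_Icc.mp hl).1; omega
    exact (stmt5_factor_pos hstep hl1).le
  · intro l _; exact stmt5_factor_le_one hη hκ l

include hstep in
lemma stmt5S_nonneg (n k : ℕ) : 0 ≤ stmt5S β η κ n k :=
  Finset.sum_nonneg fun i _ => stmt5_prod_nonneg hstep

lemma stmt5S_self (n : ℕ) : stmt5S β η κ n n = 1 := by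
  simp [stmt5S, Finset.Icc_self, Finset.Icc_eq_empty_of_lt (Nat.lt_succ_self n)]

lemma stmt5S_rec {n k : ℕ} (hkn : k < n) :
    stmt5S β η κ n k = 1 + (1 - η * ((k+1 : ℕ) : ℝ) ^ (-β) * κ) * stmt5S β η κ n (k+1) := by
  unfold stmt5S
  rw [← Finset.Ico_add_one_right_eq_Icc k n, Finset.sum_eq_sum_Ico_succ_bot (by omega)]
  rw [Finset.Icc_eq_empty_of_lt (Nat.lt_succ_self k), Finset.prod_empty]
  congr 1
  rw [Finset.mul_sum, Finset.Ico_add_one_right_eq_Icc]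
  apply Finset.sum_congr rfl
  intro i hi
  have hki : k + 1 ≤ i := (Finset.mem_Icc.mp hi).1
  rw [← Finset.Ico_add_one_right_eq_Icc (k+1) i, Finset.prod_eq_prod_Ico_succ_bot (by omega),
    Finset.Ico_add_one_right_eq_Icc]

include hβ in
lemma stmt5_delta {k : ℕ} (hk : 1 ≤ k) :
    ((k : ℝ) + 1) ^ β ≤ (k : ℝ) ^ β + (k : ℝ) ^ (β - 1) := by
  have hk1 : (1:ℝ) ≤ (k:ℝ) := by exact_mod_cast hk
  have hk0 : (0:ℝ) < (k:ℝ) := by linarith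
  have heq : ((k:ℝ) + 1) = (k:ℝ) * (1 + 1/(k:ℝ)) := by field_simp
  rw [heq, Real.mul_rpow hk0.le (by positivity)]
  have h1 : (1 + 1/(k:ℝ)) ^ β ≤ (1 + 1/(k:ℝ)) ^ (1:ℝ) :=
    Real.rpow_le_rpow_of_exponent_le (by nlinarith [one_div_pos.mpr hk0]) hβ.2.le
  rw [Real.rpow_one] at h1
  have h2 : (k:ℝ)^β * (1 + 1/(k:ℝ)) = (k:ℝ)^β + (k:ℝ)^β / (k:ℝ) := by ring
  have h3 : (k:ℝ)^(β-1) = (k:ℝ)^β / (k:ℝ) := by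
    rw [Real.rpow_sub hk0, Real.rpow_one]
  have h4 : 0 ≤ (k:ℝ)^β := Real.rpow_nonneg hk0.le _
  calc (k:ℝ)^β * (1 + 1/(k:ℝ))^β ≤ (k:ℝ)^β * (1 + 1/(k:ℝ)) := by nlinarith
    _ = (k:ℝ)^β + (k:ℝ)^(β-1) := by rw [h2, h3]

include hβ hη hκ hstep in
lemma stmt5S_bound {A : ℝ} (hA : A = 2/(η*κ)) (hA2 : 2 ≤ A) {K : ℕ} (hK1 : 1 ≤ K)
    (hKb : ((K:ℝ))^(β-1) ≤ η*κ/2) (n : ℕ) :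
    ∀ k, K ≤ k → k ≤ n → stmt5S β η κ n k ≤ A * (k:ℝ)^β := by
  have hApos : (0:ℝ) < A := by linarith
  suffices H : ∀ d k, K ≤ k → k + d = n → stmt5S β η κ n k ≤ A * (k:ℝ)^β by
    intro k h1 h2; exact H (n-k) k h1 (by omega)
  intro d
  induction d with
  | zero =>
    intro k h1 h2
    have hkn : k = n := by omega
    subst hkn
    rw [stmt5S_self]
    have hk1 : (1:ℝ) ≤ (k:ℝ) := by
      have : 1 ≤ k := le_trans hK1 h1
      exact_mod_cast this
    have hb : (1:ℝ) ≤ (k:ℝ)^β := by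
      have := Real.rpow_le_rpow_of_exponent_le hk1 (le_of_lt hβ.1) |>.trans_eq rfl
      have h0 : (k:ℝ)^(0:ℝ) ≤ (k:ℝ)^β :=
        Real.rpow_le_rpow_of_exponent_le hk1 (by linarith [hβ.1])
      rwa [Real.rpow_zero] at h0
    nlinarith
  | succ d ih =>
    intro k hKk hkd
    have hkn : k < n := by omega
    rw [stmt5S_rec hkn]
    have ih' := ih (k+1) (by omega) (by omega)
    have hfpos := stmt5_factor_pos hstep (l := k+1) (by omega)
    have hSnn := stmt5S_nonneg hstep (β := β) (η := η) (κ := κ) n (k+1)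
    set x : ℝ := ((k+1 : ℕ) : ℝ) with hxdef
    have hx0 : (0:ℝ) < x := by positivity
    have hmul : (1 - η*x^(-β)*κ) * stmt5S β η κ n (k+1) ≤ (1 - η*x^(-β)*κ) * (A * x^β) :=
      mul_le_mul_of_nonneg_left ih' hfpos.le
    have hxx : x^(-β) * x^β = 1 := by
      rw [← Real.rpow_add hx0]; simp
    have hid : (1 - η*x^(-β)*κ) * (A*x^β) = A*x^β - A*(η*κ) := by
      have h2 : (1 - η*x^(-β)*κ) * (A*x^β) = A*x^β - η*κ*A*(x^(-β)*x^β) := by ring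
      rw [h2, hxx]; ring
    have hAηκ : A * (η*κ) = 2 := by
      rw [hA]; field_simp
    have hk1 : 1 ≤ k := le_trans hK1 hKk
    have hδ : x^β ≤ (k:ℝ)^β + (k:ℝ)^(β-1) := by
      have : x = (k:ℝ) + 1 := by rw [hxdef]; push_cast; ring
      rw [this]; exact stmt5_delta hβ hk1
    have hchain : (k:ℝ)^(β-1) ≤ η*κ/2 := by
      refine le_trans ?_ hKb
      have hK0 : (0:ℝ) < (K:ℝ) := by exact_mod_cast hK1
      have hKk' : (K:ℝ) ≤ (k:ℝ) := by exact_mod_cast hKk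
      exact Real.rpow_le_rpow_of_nonpos hK0 hKk' (by linarith [hβ.2])
    have hAhalf : A * (η*κ/2) = 1 := by linarith [hAηκ]
    have hkb0 : 0 ≤ (k:ℝ)^(β-1) := Real.rpow_nonneg (by positivity) _
    nlinarith [hmul, hid, hδ, hchain]

include hη hκ hstep in
lemma stmt5S_chain (n : ℕ) : ∀ d k, 1 ≤ k → k + d ≤ n →
    stmt5S β η κ n k ≤ (d : ℝ) + stmt5S β η κ n (k + d) := by
  intro d
  induction d with
  | zero => intro k _ _; simp
  | succ d ih =>
    intro k hk1 hkd
    have hkn : k < n := by omega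
    rw [stmt5S_rec hkn]
    have hf1 := stmt5_factor_le_one hη hκ (β := β) (k+1)
    have hfpos := stmt5_factor_pos hstep (l := k+1) (by omega)
    have hSnn := stmt5S_nonneg hstep (β := β) (η := η) (κ := κ) n (k+1)
    have ih' := ih (k+1) (by omega) (by omega)
    have h1 : (1 - η * ((k+1:ℕ):ℝ)^(-β) * κ) * stmt5S β η κ n (k+1) ≤ stmt5S β η κ n (k+1) := by
      nlinarith
    have heq : k + 1 + d = k + (d + 1) := by omega
    rw [heq] at ih'
    have hcast : ((d+1:ℕ):ℝ) = (d:ℝ) + 1 := by push_cast; ring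
    rw [hcast]
    linarith

include hη hκ hstep in
lemma stmt5S_card_bound {n k : ℕ} (hkn : k ≤ n) :
    stmt5S β η κ n k ≤ ((n + 1 - k : ℕ) : ℝ) := by
  have := Finset.sum_le_card_nsmul (Finset.Icc k n)
    (fun i => ∏ l ∈ Finset.Icc (k + 1) i, (1 - η * (l : ℝ) ^ (-β) * κ)) 1
    (fun i _ => stmt5_prod_le_one hη hκ hstep)
  rw [Nat.card_Icc] at this
  simpa [stmt5S, nsmul_eq_mul] using this

end aux

theorem stmt5 (β η κ : ℝ) (hβ : β ∈ Set.Ioo (1/2 : ℝ) 1) (hη : 0 < η) (hκ : 0 < κ)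
    (hstep : ∀ l : ℕ, 1 ≤ l → η * (l : ℝ) ^ (-β) * κ < 1) :
    ∃ C : ℝ, ∀ n : ℕ, 1 ≤ n →
      ∑ k ∈ Finset.Icc 1 n,
        ((η * (k : ℝ) ^ (-β)) *
          ∑ i ∈ Finset.Icc k n, ∏ l ∈ Finset.Icc (k + 1) i, (1 - η * (l : ℝ) ^ (-β) * κ)) ^ 2
        ≤ C * n := by
  have hηκ : η * κ < 1 := by have := hstep 1 le_rfl; simpa using this
  have hηκ0 : 0 < η * κ := mul_pos hη hκ
  set A : ℝ := 2 / (η * κ) with hA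
  have hA2 : 2 ≤ A := by rw [hA, le_div_iff₀ hηκ0]; nlinarith
  have hApos : (0:ℝ) < A := by linarith
  obtain ⟨K, hKge⟩ := exists_nat_ge (max 1 ((2/(η*κ)) ^ (1/(1-β)) : ℝ))
  have hK1 : 1 ≤ K := by
    have h : (1:ℝ) ≤ (K:ℝ) := le_trans (le_max_left _ _) hKge
    exact_mod_cast h
  have hK1' : (1:ℝ) ≤ (K:ℝ) := by exact_mod_cast hK1
  have hKb : ((K:ℝ)) ^ (β-1) ≤ η*κ/2 := by
    have hM : ((2/(η*κ)) ^ (1/(1-β)) : ℝ) ≤ (K:ℝ) := le_trans (le_max_right _ _) hKge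
    have h1β : (0:ℝ) < 1 - β := by linarith [hβ.2]
    have hMpos : (0:ℝ) < 2/(η*κ) := by positivity
    have hKpow : 2/(η*κ) ≤ (K:ℝ) ^ (1-β) := by
      have h := Real.rpow_le_rpow (Real.rpow_nonneg hMpos.le _) hM h1β.le
      rw [← Real.rpow_mul hMpos.le] at h
      have hexp : (1/(1-β))*(1-β) = 1 := by field_simp
      rw [hexp, Real.rpow_one] at h
      exact h
    have h2 : (0:ℝ) < (K:ℝ) ^ (1-β) := lt_of_lt_of_le hMpos hKpow
    have hneg : β - 1 = -(1-β) := by ring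
    rw [hneg, Real.rpow_neg (by positivity)]
    calc ((K:ℝ) ^ (1-β))⁻¹ ≤ (2/(η*κ))⁻¹ := inv_anti₀ hMpos hKpow
      _ = η*κ/2 := by rw [inv_div]
  have hKβ1 : (1:ℝ) ≤ (K:ℝ)^β := by
    have h0 : (K:ℝ)^(0:ℝ) ≤ (K:ℝ)^β := Real.rpow_le_rpow_of_exponent_le hK1' (by linarith [hβ.1])
    rwa [Real.rpow_zero] at h0
  set C0 : ℝ := η * ((K:ℝ) + A * (K:ℝ)^β) with hC0
  have hC0pos : 0 < C0 := by positivity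
  refine ⟨C0^2, ?_⟩
  intro n hn
  have key : ∀ k, 1 ≤ k → k ≤ n → η * (k:ℝ)^(-β) * stmt5S β η κ n k ≤ C0 := by
    intro k hk1 hkn
    have hk1' : (1:ℝ) ≤ (k:ℝ) := by exact_mod_cast hk1
    have hknegb : (k:ℝ)^(-β) ≤ 1 :=
      Real.rpow_le_one_of_one_le_of_nonpos hk1' (by linarith [hβ.1])
    have hknegb0 : 0 ≤ (k:ℝ)^(-β) := Real.rpow_nonneg (by positivity) _
    have hS0 := stmt5S_nonneg hstep (β := β) (η := η) (κ := κ) n k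
    have hbase : A ≤ (K:ℝ) + A * (K:ℝ)^β := by nlinarith
    have hSbd : (k:ℝ)^(-β) * stmt5S β η κ n k ≤ (K:ℝ) + A * (K:ℝ)^β := by
      by_cases hKk : K ≤ k
      · have hSb := stmt5S_bound hβ hη hκ hstep rfl hA2 hK1 hKb n k hKk hkn
        have h5 : (k:ℝ)^(-β) * stmt5S β η κ n k ≤ (k:ℝ)^(-β) * (A * (k:ℝ)^β) :=
          mul_le_mul_of_nonneg_left hSb hknegb0
        have hxx : (k:ℝ)^(-β) * (k:ℝ)^β = 1 := by
          rw [← Real.rpow_add (by positivity : (0:ℝ) < (k:ℝ))]; simp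
        have h6 : (k:ℝ)^(-β) * (A * (k:ℝ)^β) = A := by
          rw [show (k:ℝ)^(-β) * (A * (k:ℝ)^β) = A * ((k:ℝ)^(-β) * (k:ℝ)^β) from by ring,
            hxx, mul_one]
        rw [h6] at h5
        exact h5.trans hbase
      · push_neg at hKk
        have hS : stmt5S β η κ n k ≤ (K:ℝ) + A * (K:ℝ)^β := by
          by_cases hKn : K ≤ n
          · have hch := stmt5S_chain hη hκ hstep n (K - k) k hk1 (by omega)
            have hkK : k + (K - k) = K := by omega
            rw [hkK] at hch
            have hSK := stmt5S_bound hβ hη hκ hstep rfl hA2 hK1 hKb n K le_rfl hKn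
            have hcst : ((K-k:ℕ):ℝ) ≤ (K:ℝ) := by exact_mod_cast (show K - k ≤ K by omega)
            have hAK : A * (K:ℝ)^β = A * (K:ℝ)^β := rfl
            linarith
          · have hc := stmt5S_card_bound hη hκ hstep (β := β) hkn
            have hcst : ((n+1-k:ℕ):ℝ) ≤ (K:ℝ) := by
              exact_mod_cast (show n + 1 - k ≤ K by omega)
            have hAKβ : 0 ≤ A * (K:ℝ)^β := by positivity
            linarith
        calc (k:ℝ)^(-β) * stmt5S β η κ n k ≤ 1 * ((K:ℝ) + A * (K:ℝ)^β) :=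
              mul_le_mul hknegb hS hS0 (by norm_num)
          _ = (K:ℝ) + A * (K:ℝ)^β := one_mul _
    rw [hC0, mul_assoc]
    exact mul_le_mul_of_nonneg_left hSbd hη.le
  have hsum : ∑ k ∈ Finset.Icc 1 n, (η * (k:ℝ)^(-β) * stmt5S β η κ n k)^2
      ≤ ∑ _k ∈ Finset.Icc 1 n, C0^2 := by
    apply Finset.sum_le_sum
    intro k hk
    obtain ⟨hk1, hkn⟩ := Finset.mem_Icc.mp hk
    have hD0 : 0 ≤ η * (k:ℝ)^(-β) * stmt5S β η κ n k := by
      apply mul_nonneg (mul_nonneg hη.le (Real.rpow_nonneg (by positivity) _))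
      exact stmt5S_nonneg hstep n k
    exact pow_le_pow_left₀ hD0 (key k hk1 hkn) 2
  have hcard : ∑ _k ∈ Finset.Icc 1 n, C0^2 = C0^2 * n := by
    rw [Finset.sum_const, Nat.card_Icc]
    simp [nsmul_eq_mul]
    ring
  calc ∑ k ∈ Finset.Icc 1 n,
        ((η * (k : ℝ) ^ (-β)) *
          ∑ i ∈ Finset.Icc k n, ∏ l ∈ Finset.Icc (k + 1) i, (1 - η * (l : ℝ) ^ (-β) * κ)) ^ 2
      = ∑ k ∈ Finset.Icc 1 n, (η * (k:ℝ)^(-β) * stmt5S β η κ n k)^2 := rfl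
    _ ≤ ∑ _k ∈ Finset.Icc 1 n, C0^2 := hsum
    _ = C0^2 * n := hcard
end

section
/- Fix β ∈ (1/2, 1), c > 0, and η_l = η·l^{-β} with η > 0 and c·η_l < 1 for all l. Then for 1 ≤ k ≤ n, the weights U_k := η_k ∑_{i=k}^{n} ∏_{l=k+1}^{i}(1 - c·η_l) satisfy sup_{1 ≤ k ≤ n} U_k ≤ C for a constant C independent of n and k. -/
open MeasureTheory ProbabilityTheory Real
open scoped ENNReal NNReal RealInnerProductSpace

theorem stmt12 (β η c : ℝ) (hβ : β ∈ Set.Ioo (1/2 : ℝ) 1) (hη : 0 < η) (hc : 0 < c)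
    (hstep : ∀ l : ℕ, 1 ≤ l → c * (η * (l : ℝ) ^ (-β)) < 1) :
    ∃ C : ℝ, ∀ n k : ℕ, 1 ≤ k → k ≤ n →
      (η * (k : ℝ) ^ (-β)) *
        ∑ i ∈ Finset.Icc k n, ∏ l ∈ Finset.Icc (k + 1) i, (1 - c * (η * (l : ℝ) ^ (-β)))
      ≤ C := by
  obtain ⟨hβ1, hβ2⟩ := hβ
  have hβ0 : (0:ℝ) < β := by linarith
  set a : ℕ → ℝ := fun l => c * (η * (l:ℝ) ^ (-β)) with ha_def
  have ha_pos : ∀ l : ℕ, 1 ≤ l → 0 < a l := by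
    intro l hl
    have hl0 : (0:ℝ) < (l:ℝ) := by exact_mod_cast hl
    have : (0:ℝ) < (l:ℝ) ^ (-β) := Real.rpow_pos_of_pos hl0 _
    simp only [ha_def]
    positivity
  have ha_lt : ∀ l : ℕ, 1 ≤ l → a l < 1 := hstep
  set s : ℕ → ℝ := fun l => Real.sqrt (1 - a l) with hs_def
  have hs_nonneg : ∀ l : ℕ, 0 ≤ s l := fun l => Real.sqrt_nonneg _
  have hs_le : ∀ l : ℕ, 1 ≤ l → s l ≤ 1 := by
    intro l hl
    have h := Real.sqrt_le_sqrt (show 1 - a l ≤ 1 by linarith [ha_pos l hl])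
    rwa [Real.sqrt_one] at h
  have h2β : (1:ℝ) ≤ (2:ℝ) ^ β := Real.one_le_rpow one_le_two hβ0.le
  have h2βpos : (0:ℝ) < (2:ℝ) ^ β := Real.rpow_pos_of_pos two_pos _
  set L : ℕ := ⌈(2*β/(c*η)) ^ ((1:ℝ)/(1-β))⌉₊ + 1 with hL_def
  -- For l ≥ L, 2β/l ≤ a l
  have hL1 : ∀ l : ℕ, L ≤ l → 2*β/(l:ℝ) ≤ a l := by
    intro l hl
    have hl1 : 1 ≤ l := le_trans (Nat.le_add_left 1 _) hl
    have hl0 : (0:ℝ) < (l:ℝ) := by exact_mod_cast hl1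
    have hx : (0:ℝ) < 2*β/(c*η) := by positivity
    have hcl : (2*β/(c*η)) ^ ((1:ℝ)/(1-β)) ≤ (l:ℝ) := by
      calc (2*β/(c*η)) ^ ((1:ℝ)/(1-β)) ≤ (⌈(2*β/(c*η)) ^ ((1:ℝ)/(1-β))⌉₊ : ℝ) := Nat.le_ceil _
        _ ≤ (l:ℝ) := by exact_mod_cast le_trans (Nat.le_add_right _ 1) hl
    have h1β : (0:ℝ) < 1 - β := by linarith
    have key : 2*β/(c*η) ≤ (l:ℝ) ^ (1-β) := by
      have := Real.rpow_le_rpow (le_of_lt (Real.rpow_pos_of_pos hx _)) hcl h1β.le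
      rwa [← Real.rpow_mul hx.le, one_div, inv_mul_cancel₀ h1β.ne', Real.rpow_one] at this
    have hrw : a l * (l:ℝ) = c*η * (l:ℝ) ^ (1-β) := by
      have h1 : (l:ℝ) ^ (-β) * (l:ℝ) = (l:ℝ) ^ (1-β) := by
        rw [show (1:ℝ) - β = -β + 1 by ring, Real.rpow_add hl0, Real.rpow_one]
      have h2 : a l * (l:ℝ) = c*η*((l:ℝ)^(-β)*(l:ℝ)) := by simp only [ha_def]; ring
      rw [h2, h1]
    rw [div_le_iff₀ hl0, hrw]
    calc 2*β ≤ c*η * (2*β/(c*η)) := by field_simp; norm_num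
      _ ≤ c*η * (l:ℝ) ^ (1-β) := by
          apply mul_le_mul_of_nonneg_left key (by positivity)
  -- factor lemma 1 : (i)^(-β) ≤ 2^β * (i+1)^(-β)
  have hfac1 : ∀ i : ℕ, 1 ≤ i → (i:ℝ) ^ (-β) ≤ (2:ℝ)^β * ((i:ℝ)+1) ^ (-β) := by
    intro i hi
    have hi0 : (0:ℝ) < (i:ℝ) := by exact_mod_cast hi
    have h1 : ((i:ℝ)+1) ≤ 2*(i:ℝ) := by
      have : (1:ℝ) ≤ (i:ℝ) := by exact_mod_cast hi
      linarith
    have h2 : (2*(i:ℝ)) ^ (-β) ≤ ((i:ℝ)+1) ^ (-β) :=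
      Real.rpow_le_rpow_of_nonpos (by linarith) h1 (by linarith)
    have h3 : (2*(i:ℝ)) ^ (-β) = (2:ℝ) ^ (-β) * (i:ℝ) ^ (-β) :=
      Real.mul_rpow (by norm_num) hi0.le
    have h4 : (i:ℝ) ^ (-β) = (2:ℝ)^β * ((2:ℝ) ^ (-β) * (i:ℝ) ^ (-β)) := by
      rw [← mul_assoc, ← Real.rpow_add two_pos]
      simp
    rw [h4]
    exact mul_le_mul_of_nonneg_left (h3 ▸ h2) h2βpos.le
  -- factor lemma 2 : for L ≤ i+1, i^(-β) * s(i+1) ≤ (i+1)^(-β)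
  have hfac2 : ∀ i : ℕ, 1 ≤ i → L ≤ i + 1 → (i:ℝ) ^ (-β) * s (i+1) ≤ ((i:ℝ)+1) ^ (-β) := by
    intro i hi hLi
    have hi0 : (0:ℝ) < (i:ℝ) := by exact_mod_cast hi
    have hi10 : (0:ℝ) < (i:ℝ)+1 := by linarith
    have hcast : ((i+1 : ℕ):ℝ) = (i:ℝ)+1 := by push_cast; ring
    have ha1 : a (i+1) < 1 := ha_lt _ (Nat.le_add_left 1 i)
    have ha0 : 0 < a (i+1) := ha_pos _ (Nat.le_add_left 1 i)
    have hA : (0:ℝ) ≤ (i:ℝ) ^ (-β) := (Real.rpow_pos_of_pos hi0 _).le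
    -- rewrite LHS as sqrt of something
    have hLHS : (i:ℝ) ^ (-β) * s (i+1) = Real.sqrt (((i:ℝ) ^ (-β))^2 * (1 - a (i+1))) := by
      rw [Real.sqrt_mul (sq_nonneg _), Real.sqrt_sq hA]
    rw [hLHS]
    rw [show ((i:ℝ)+1) ^ (-β) = Real.sqrt ((((i:ℝ)+1) ^ (-β))^2) from
      (Real.sqrt_sq (Real.rpow_pos_of_pos hi10 _).le).symm]
    apply Real.sqrt_le_sqrt
    -- squared inequality
    have hsq1 : ((i:ℝ) ^ (-β))^2 = (i:ℝ) ^ (-(2*β)) := by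
      rw [← Real.rpow_natCast ((i:ℝ) ^ (-β)) 2, ← Real.rpow_mul hi0.le]
      norm_num; ring_nf
    have hsq2 : (((i:ℝ)+1) ^ (-β))^2 = ((i:ℝ)+1) ^ (-(2*β)) := by
      rw [← Real.rpow_natCast (((i:ℝ)+1) ^ (-β)) 2, ← Real.rpow_mul hi10.le]
      norm_num; ring_nf
    rw [hsq1, hsq2]
    -- Bernoulli
    have hbern : 1 - 2*β/((i:ℝ)+1) ≤ ((i:ℝ)/((i:ℝ)+1)) ^ (2*β) := by
      have := one_add_mul_self_le_rpow_one_add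
        (s := -(1/((i:ℝ)+1)))
        (by
          have h1 : (1:ℝ)/((i:ℝ)+1) ≤ 1 := by
            rw [div_le_one hi10]; linarith
          linarith) (p := 2*β) (by linarith)
      have he : (1:ℝ) + -(1/((i:ℝ)+1)) = (i:ℝ)/((i:ℝ)+1) := by field_simp; ring
      rw [he] at this
      calc 1 - 2*β/((i:ℝ)+1) = 1 + 2*β * -(1/((i:ℝ)+1)) := by ring
        _ ≤ _ := this
    have hstep2 : 1 - a (i+1) ≤ ((i:ℝ)/((i:ℝ)+1)) ^ (2*β) := by
      have := hL1 (i+1) hLi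
      rw [hcast] at this
      linarith [hbern, this]
    have hratio : ((i:ℝ)/((i:ℝ)+1)) ^ (2*β) = (i:ℝ) ^ (2*β) * (((i:ℝ)+1) ^ (2*β))⁻¹ := by
      rw [Real.div_rpow hi0.le hi10.le, div_eq_mul_inv]
    have hposi : (0:ℝ) < (i:ℝ) ^ (2*β) := Real.rpow_pos_of_pos hi0 _
    have hposi1 : (0:ℝ) < ((i:ℝ)+1) ^ (2*β) := Real.rpow_pos_of_pos hi10 _
    have hinv : (i:ℝ) ^ (-(2*β)) = ((i:ℝ) ^ (2*β))⁻¹ := Real.rpow_neg hi0.le _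
    have hinv1 : ((i:ℝ)+1) ^ (-(2*β)) = (((i:ℝ)+1) ^ (2*β))⁻¹ := Real.rpow_neg hi10.le _
    rw [hinv, hinv1]
    calc ((i:ℝ) ^ (2*β))⁻¹ * (1 - a (i+1))
        ≤ ((i:ℝ) ^ (2*β))⁻¹ * ((i:ℝ) ^ (2*β) * (((i:ℝ)+1) ^ (2*β))⁻¹) := by
          rw [← hratio]
          exact mul_le_mul_of_nonneg_left hstep2 (by positivity)
      _ = (((i:ℝ)+1) ^ (2*β))⁻¹ := by field_simp
  -- now fix n k
  refine ⟨2 * ((2:ℝ)^β)^(L+1) / c, ?_⟩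
  intro n k hk hkn
  set g : ℕ → ℝ := fun l => if l ≤ L then (2:ℝ)^β else 1 with hg_def
  have hg1 : ∀ l, (1:ℝ) ≤ g l := by
    intro l
    simp only [hg_def]
    split
    · exact h2β
    · exact le_refl 1
  set F : ℕ → ℝ := fun i => ∏ l ∈ Finset.Icc (k+1) i, s l with hF_def
  have hF_nonneg : ∀ i, 0 ≤ F i := fun i => Finset.prod_nonneg (fun l _ => hs_nonneg l)
  have hFsucc : ∀ i, k ≤ i → F (i+1) = F i * s (i+1) := by
    intro i hi
    simp only [hF_def]
    exact Finset.prod_Icc_succ_top (by omega) s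
  -- key1 : k^(-β) * F i ≤ (∏ g) * i^(-β)
  have key1 : ∀ i, k ≤ i →
      (k:ℝ) ^ (-β) * F i ≤ (∏ l ∈ Finset.Icc (k+1) i, g l) * (i:ℝ) ^ (-β) := by
    intro i hi
    induction i, hi using Nat.le_induction with
    | base =>
      simp only [hF_def]
      rw [Finset.Icc_eq_empty (by omega), Finset.prod_empty, Finset.prod_empty]
      simp
    | succ i hi IH =>
      have hi1 : 1 ≤ i := le_trans hk hi
      have hi0 : (0:ℝ) < (i:ℝ) := by exact_mod_cast hi1
      have hcast : ((i+1 : ℕ):ℝ) = (i:ℝ)+1 := by push_cast; ring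
      have hprod : F (i+1) = F i * s (i+1) := hFsucc i hi
      have hgprod : ∏ l ∈ Finset.Icc (k+1) (i+1), g l
          = (∏ l ∈ Finset.Icc (k+1) i, g l) * g (i+1) :=
        Finset.prod_Icc_succ_top (by omega) g
      have hgnn : 0 ≤ ∏ l ∈ Finset.Icc (k+1) i, g l :=
        Finset.prod_nonneg (fun l _ => le_trans zero_le_one (hg1 l))
      have hstepfac : (i:ℝ) ^ (-β) * s (i+1) ≤ g (i+1) * ((i:ℝ)+1) ^ (-β) := by
        by_cases hLe : i + 1 ≤ L
        · simp only [hg_def, if_pos hLe]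
          calc (i:ℝ) ^ (-β) * s (i+1) ≤ (i:ℝ) ^ (-β) * 1 :=
                mul_le_mul_of_nonneg_left (hs_le _ (by omega)) (Real.rpow_pos_of_pos hi0 _).le
            _ = (i:ℝ) ^ (-β) := mul_one _
            _ ≤ (2:ℝ)^β * ((i:ℝ)+1) ^ (-β) := hfac1 i hi1
        · simp only [hg_def, if_neg hLe, one_mul]
          exact hfac2 i hi1 (by omega)
      calc (k:ℝ) ^ (-β) * F (i+1) = ((k:ℝ) ^ (-β) * F i) * s (i+1) := by
            rw [hprod]; ring
        _ ≤ ((∏ l ∈ Finset.Icc (k+1) i, g l) * (i:ℝ) ^ (-β)) * s (i+1) :=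
            mul_le_mul_of_nonneg_right IH (hs_nonneg _)
        _ = (∏ l ∈ Finset.Icc (k+1) i, g l) * ((i:ℝ) ^ (-β) * s (i+1)) := by ring
        _ ≤ (∏ l ∈ Finset.Icc (k+1) i, g l) * (g (i+1) * ((i:ℝ)+1) ^ (-β)) :=
            mul_le_mul_of_nonneg_left hstepfac hgnn
        _ = (∏ l ∈ Finset.Icc (k+1) (i+1), g l) * (((i+1:ℕ)):ℝ) ^ (-β) := by
            rw [hgprod, hcast]; ring
  -- key2 : ∏ g ≤ (2^β)^L
  have key2 : ∀ i : ℕ, ∏ l ∈ Finset.Icc (k+1) i, g l ≤ ((2:ℝ)^β)^L := by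
    intro i
    have hsplit := Finset.prod_filter_mul_prod_filter_not (Finset.Icc (k+1) i)
      (fun l => l ≤ L) g
    have h2 : ∏ l ∈ Finset.filter (fun l => ¬ l ≤ L) (Finset.Icc (k+1) i), g l = 1 := by
      apply Finset.prod_eq_one
      intro l hl
      simp only [Finset.mem_filter] at hl
      simp only [hg_def, if_neg hl.2]
    have h1 : ∏ l ∈ Finset.filter (fun l => l ≤ L) (Finset.Icc (k+1) i), g l
        = ((2:ℝ)^β) ^ (Finset.filter (fun l => l ≤ L) (Finset.Icc (k+1) i)).card := by
      rw [Finset.prod_congr rfl (fun l hl => ?_), Finset.prod_const]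
      simp only [Finset.mem_filter] at hl
      simp only [hg_def, if_pos hl.2]
    have hcard : (Finset.filter (fun l => l ≤ L) (Finset.Icc (k+1) i)).card ≤ L := by
      have hsub : Finset.filter (fun l => l ≤ L) (Finset.Icc (k+1) i) ⊆ Finset.Icc 1 L := by
        intro l hl
        simp only [Finset.mem_filter, Finset.mem_Icc] at hl ⊢
        omega
      calc _ ≤ (Finset.Icc 1 L).card := Finset.card_le_card hsub
        _ = L := by rw [Nat.card_Icc]; omega
    calc ∏ l ∈ Finset.Icc (k+1) i, g l
        = ((2:ℝ)^β) ^ (Finset.filter (fun l => l ≤ L) (Finset.Icc (k+1) i)).card := by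
          rw [← hsplit, h1, h2, mul_one]
      _ ≤ ((2:ℝ)^β)^L := pow_le_pow_right₀ h2β hcard
  -- telescoping
  have tel : ∀ m, k ≤ m → ∑ i ∈ Finset.Icc k m, (F i - F (i+1)) = F k - F (m+1) := by
    intro m hm
    induction m, hm using Nat.le_induction with
    | base => rw [Finset.Icc_self, Finset.sum_singleton]
    | succ m hm IH =>
      rw [Finset.sum_Icc_succ_top (by omega), IH]
      ring
  have key3 : ∑ i ∈ Finset.Icc k n, a (i+1) * F i ≤ 2 := by
    have hterm : ∀ i ∈ Finset.Icc k n, a (i+1) * F i ≤ 2 * (F i - F (i+1)) := by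
      intro i hi
      simp only [Finset.mem_Icc] at hi
      have hsle : s (i+1) ≤ 1 - a (i+1) / 2 := by
        have := Real.sqrt_one_add_le (x := -(a (i+1)))
          (by linarith [ha_lt (i+1) (Nat.le_add_left 1 i)])
        simp only [hs_def]
        calc Real.sqrt (1 - a (i+1)) = Real.sqrt (1 + -(a (i+1))) := by ring_nf
          _ ≤ 1 + -(a (i+1)) / 2 := this
          _ = 1 - a (i+1) / 2 := by ring
      rw [hFsucc i hi.1]
      have hFnn := hF_nonneg i
      nlinarith [hFnn, hsle]
    calc ∑ i ∈ Finset.Icc k n, a (i+1) * F i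
        ≤ ∑ i ∈ Finset.Icc k n, 2 * (F i - F (i+1)) := Finset.sum_le_sum hterm
      _ = 2 * (F k - F (n+1)) := by rw [← Finset.mul_sum, tel n hkn]
      _ ≤ 2 := by
          have : F k = 1 := by
            simp only [hF_def]
            rw [Finset.Icc_eq_empty (by omega), Finset.prod_empty]
          rw [this]
          nlinarith [hF_nonneg (n+1)]
  -- per-term bound
  have hterm : ∀ i ∈ Finset.Icc k n,
      (η * (k:ℝ) ^ (-β)) * ∏ l ∈ Finset.Icc (k+1) i, (1 - a l)
        ≤ ((2:ℝ)^β)^(L+1) / c * (a (i+1) * F i) := by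
    intro i hi
    simp only [Finset.mem_Icc] at hi
    have hi1 : 1 ≤ i := le_trans hk hi.1
    have hi0 : (0:ℝ) < (i:ℝ) := by exact_mod_cast hi1
    have hk0 : (0:ℝ) < (k:ℝ) := by exact_mod_cast hk
    have hP : ∏ l ∈ Finset.Icc (k+1) i, (1 - a l) = F i ^ 2 := by
      simp only [hF_def]
      rw [← Finset.prod_pow]
      apply Finset.prod_congr rfl
      intro l hl
      simp only [Finset.mem_Icc] at hl
      rw [hs_def]
      exact (Real.sq_sqrt (by linarith [ha_lt l (by omega)])).symm
    rw [hP]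
    have hkF : (k:ℝ) ^ (-β) * F i ≤ ((2:ℝ)^β)^L * (i:ℝ) ^ (-β) :=
      le_trans (key1 i hi.1)
        (mul_le_mul_of_nonneg_right (key2 i) (Real.rpow_pos_of_pos hi0 _).le)
    have hcast : ((i+1 : ℕ):ℝ) = (i:ℝ)+1 := by push_cast; ring
    have hai : a (i+1) = c * (η * ((i:ℝ)+1) ^ (-β)) := by
      simp only [ha_def, hcast]
    have hη1 : η * ((i:ℝ)+1) ^ (-β) = a (i+1) / c := by
      rw [hai]; field_simp
    calc (η * (k:ℝ) ^ (-β)) * F i ^ 2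
        = η * (((k:ℝ) ^ (-β)) * F i) * F i := by ring
      _ ≤ η * (((2:ℝ)^β)^L * (i:ℝ) ^ (-β)) * F i := by
          apply mul_le_mul_of_nonneg_right _ (hF_nonneg i)
          exact mul_le_mul_of_nonneg_left hkF hη.le
      _ ≤ η * (((2:ℝ)^β)^L * ((2:ℝ)^β * ((i:ℝ)+1) ^ (-β))) * F i := by
          apply mul_le_mul_of_nonneg_right _ (hF_nonneg i)
          apply mul_le_mul_of_nonneg_left _ hη.le
          exact mul_le_mul_of_nonneg_left (hfac1 i hi1) (by positivity)
      _ = ((2:ℝ)^β)^(L+1) * ((η * ((i:ℝ)+1) ^ (-β)) * F i) := by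
          rw [pow_succ]; ring
      _ = ((2:ℝ)^β)^(L+1) / c * (a (i+1) * F i) := by
          rw [hη1]; field_simp
  -- conclude
  calc (η * (k:ℝ) ^ (-β)) *
        ∑ i ∈ Finset.Icc k n, ∏ l ∈ Finset.Icc (k+1) i, (1 - a l)
      = ∑ i ∈ Finset.Icc k n,
          (η * (k:ℝ) ^ (-β)) * ∏ l ∈ Finset.Icc (k+1) i, (1 - a l) := by
        rw [Finset.mul_sum]
    _ ≤ ∑ i ∈ Finset.Icc k n, ((2:ℝ)^β)^(L+1) / c * (a (i+1) * F i) :=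
        Finset.sum_le_sum hterm
    _ = ((2:ℝ)^β)^(L+1) / c * ∑ i ∈ Finset.Icc k n, a (i+1) * F i := by
        rw [Finset.mul_sum]
    _ ≤ ((2:ℝ)^β)^(L+1) / c * 2 := by
        apply mul_le_mul_of_nonneg_left key3 (by positivity)
    _ = 2 * ((2:ℝ)^β)^(L+1) / c := by ring
end

section
/- Let {a_i} satisfy a_i ≤ (1 - c·η_i) a_{i-1} + b·η_i·r_{i-1} with a₀ ≥ 0, where η_i = η·i^{-β}, β ∈ (1/2,1), c, b > 0, c·η_i < 1 for all i, and r_i ≤ M·i^{-β} for i ≥ 1 (and r₀ ≤ M). Then the Cesàro average ā_n = n^{-1}∑_{i=1}^n a_i satisfies ā_n ≤ C·max(a₀/n, n^{-β}) for a constant C independent of n and a₀. -/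
open MeasureTheory ProbabilityTheory Real
open scoped ENNReal NNReal RealInnerProductSpace

lemma aux_sum_inv_sq : ∀ n : ℕ, 1 ≤ n → ∑ i ∈ Finset.Icc 1 n, (((i:ℝ))^2)⁻¹ ≤ 2 - (n:ℝ)⁻¹ := by
  intro n hn
  induction n with
  | zero => omega
  | succ n ih =>
    rcases Nat.eq_zero_or_pos n with rfl | hn'
    · norm_num
    rw [Finset.sum_Icc_succ_top (by omega)]
    have h1 : (1:ℝ) ≤ n := by exact_mod_cast hn'
    have := ih hn'
    have h2 : ((((n:ℝ)+1))^2)⁻¹ ≤ (n:ℝ)⁻¹ - ((n:ℝ)+1)⁻¹ := by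
      rw [inv_eq_one_div, inv_eq_one_div, inv_eq_one_div,
        div_sub_div _ _ (by positivity) (by positivity),
        div_le_div_iff₀ (by positivity) (by positivity)]
      ring_nf
      nlinarith
    push_cast
    linarith

lemma aux_sum_rpow (β : ℝ) (hβ0 : 0 < β) (hβ1 : β < 1) :
    ∀ n : ℕ, ∑ i ∈ Finset.Icc 1 n, (i:ℝ) ^ (-β) ≤ (n:ℝ) ^ (1-β) / (1-β) := by
  intro n
  induction n with
  | zero => simp [Real.zero_rpow (by linarith : (1:ℝ)-β ≠ 0)]
  | succ n ih =>
    rw [Finset.sum_Icc_succ_top (by omega)]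
    have key : (n:ℝ) ^ (1-β) + (1-β) * ((n:ℝ)+1) ^ (-β) ≤ ((n:ℝ)+1) ^ (1-β) := by
      set x : ℝ := (n:ℝ) + 1 with hx
      have hx1 : (1:ℝ) ≤ x := by
        rw [hx]; exact le_add_of_nonneg_left (Nat.cast_nonneg n)
      have hx0 : (0:ℝ) < x := by linarith
      have hinv : 1/x ≤ 1 := by rw [div_le_one hx0]; exact hx1
      have hb : (1 - 1/x) ^ (1-β) ≤ 1 + (1-β) * (-(1/x)) := by
        have := rpow_one_add_le_one_add_mul_self
          (s := -(1/x)) (p := 1-β) (by linarith) (by linarith) (by linarith)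
        rw [sub_eq_add_neg]; simpa using this
      have hn : (n:ℝ) = x - 1 := by simp [hx]
      have hfact : (x - 1 : ℝ) = x * (1 - 1/x) := by field_simp
      have h2 : ((n:ℝ)) ^ (1-β) = x ^ (1-β) * (1 - 1/x) ^ (1-β) := by
        rw [hn, hfact, Real.mul_rpow hx0.le (by linarith)]
      have h3 : x ^ (1-β) * (1/x) = x ^ (-β) := by
        rw [one_div, ← Real.rpow_neg_one x, ← Real.rpow_add hx0]
        ring_nf
      calc (n:ℝ) ^ (1-β) + (1-β) * x ^ (-β)
          = x ^ (1-β) * (1 - 1/x) ^ (1-β) + (1-β) * x ^ (-β) := by rw [h2]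
        _ ≤ x ^ (1-β) * (1 + (1-β) * (-(1/x))) + (1-β) * x ^ (-β) := by
            have hxp : (0:ℝ) ≤ x ^ (1-β) := by positivity
            nlinarith
        _ = x ^ (1-β) - (1-β) * (x ^ (1-β) * (1/x)) + (1-β) * x ^ (-β) := by ring
        _ = x ^ (1-β) := by rw [h3]; ring
    push_cast
    have hle : ((n:ℝ)+1) ^ (-β) ≤ (((n:ℝ)+1) ^ (1-β) - (n:ℝ) ^ (1-β)) / (1-β) := by
      rw [le_div_iff₀ (by linarith)]
      nlinarith
    have heq : (n:ℝ)^(1-β)/(1-β) + (((n:ℝ)+1)^(1-β) - (n:ℝ)^(1-β))/(1-β)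
        = ((n:ℝ)+1)^(1-β)/(1-β) := by ring
    push_cast at ih
    linarith

set_option maxHeartbeats 1000000 in
theorem stmt17 (β η c b M : ℝ) (hβ : β ∈ Set.Ioo (1/2 : ℝ) 1) (hη : 0 < η)
    (hc : 0 < c) (hb : 0 < b) (hM : 0 < M) :
    ∃ C : ℝ, ∀ a r : ℕ → ℝ, 0 ≤ a 0 →
      (∀ i : ℕ, 1 ≤ i → c * (η * (i : ℝ) ^ (-β)) < 1) →
      (∀ i : ℕ, 1 ≤ i → r i ≤ M * (i : ℝ) ^ (-β)) → r 0 ≤ M →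
      (∀ i : ℕ, 1 ≤ i →
        a i ≤ (1 - c * (η * (i : ℝ) ^ (-β))) * a (i - 1)
          + b * (η * (i : ℝ) ^ (-β)) * r (i - 1)) →
      ∀ n : ℕ, 1 ≤ n →
        (∑ i ∈ Finset.Icc 1 n, a i) / n ≤ C * max (a 0 / n) ((n : ℝ) ^ (-β)) := by
  obtain ⟨hβ1, hβ2⟩ := hβ
  have hβ0 : 0 < β := by linarith
  have h1β : (0:ℝ) < 1 - β := by linarith
  obtain ⟨N0, hN0⟩ := exists_nat_ge ((2/(c*η)) ^ (1/(1-β)))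
  set N : ℕ := N0 + 1 with hN
  have hN1 : (1:ℝ) ≤ (N:ℝ) := by exact_mod_cast Nat.one_le_iff_ne_zero.mpr (by omega)
  -- threshold property
  have hthr : ∀ i : ℕ, N ≤ i → 2 ≤ c * η * ((i:ℝ) ^ (-β)) * (i:ℝ) := by
    intro i hi
    have hiN : (N:ℝ) ≤ (i:ℝ) := by exact_mod_cast hi
    have hx0 : (0:ℝ) < (i:ℝ) := lt_of_lt_of_le (by linarith) hiN
    have h1 : ((2/(c*η))^(1/(1-β)) : ℝ) ≤ (i:ℝ) := by
      refine hN0.trans ?_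
      have : (N0:ℝ) ≤ (N:ℝ) := by exact_mod_cast Nat.le_succ N0
      linarith
    have h2 : (((2/(c*η))^(1/(1-β)) : ℝ))^(1-β) ≤ (i:ℝ)^(1-β) :=
      Real.rpow_le_rpow (by positivity) h1 (by linarith)
    have h3 : (((2/(c*η))^(1/(1-β)) : ℝ))^(1-β) = 2/(c*η) := by
      rw [one_div, Real.rpow_inv_rpow (by positivity) (by linarith)]
    have h4 : 2/(c*η) ≤ (i:ℝ)^(1-β) := by rw [← h3]; exact h2
    have h5 : 2 ≤ (i:ℝ)^(1-β) * (c*η) := (div_le_iff₀ (by positivity)).mp h4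
    have h6 : (i:ℝ)^(1-β) = (i:ℝ)^(-β) * (i:ℝ) := by
      rw [show (1:ℝ)-β = -β + 1 by ring, Real.rpow_add hx0, Real.rpow_one]
    rw [h6] at h5; linarith [h5]
  set K : ℝ := 2*(b*M/c)*(N:ℝ)^β with hK
  have hKpos : 0 < K := by rw [hK]; positivity
  have hNb : (1:ℝ) ≤ (N:ℝ)^β := by
    have := Real.rpow_le_rpow (by norm_num) hN1 hβ0.le
    simpa using this
  have hK2 : 2*b*M ≤ K*c := by
    have hKc : K*c = 2*b*M*(N:ℝ)^β := by rw [hK]; field_simp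
    rw [hKc]; nlinarith [mul_pos hb hM]
  refine ⟨2*(N:ℝ)^2 + K/(1-β), ?_⟩
  intro a r ha0 hsmall hr hr0 hrec
  have hbMc : (0:ℝ) ≤ b*M/c := by positivity
  -- crude uniform bound
  have h1 : ∀ i : ℕ, a i ≤ a 0 + b*M/c := by
    intro i
    induction i with
    | zero => linarith
    | succ i ih =>
      have hrec' := hrec (i+1) (by omega)
      simp only [Nat.add_sub_cancel] at hrec'
      push_cast at hrec'
      set e : ℝ := η * ((i:ℝ)+1) ^ (-β) with he
      have he0 : 0 < e := by rw [he]; positivity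
      have he1 : c * e < 1 := by
        have := hsmall (i+1) (by omega); push_cast at this; exact this
      have hri : r i ≤ M := by
        rcases Nat.eq_zero_or_pos i with rfl | hi
        · exact hr0
        · have h := hr i hi
          have h1i : (1:ℝ) ≤ (i:ℝ) := by exact_mod_cast hi
          have h2i : ((i:ℝ))^(-β) ≤ 1 :=
            Real.rpow_le_one_of_one_le_of_nonpos h1i (by linarith)
          nlinarith
      have hstep : a (i+1) ≤ (1 - c*e) * (a 0 + b*M/c) + b*e*M := by
        refine hrec'.trans ?_
        have h1' : (1 - c*e) * a i ≤ (1 - c*e) * (a 0 + b*M/c) :=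
          mul_le_mul_of_nonneg_left ih (by linarith)
        have h2' : b*e*(r i) ≤ b*e*M :=
          mul_le_mul_of_nonneg_left hri (by positivity)
        linarith
      have : (1 - c*e) * (a 0 + b*M/c) + b*e*M ≤ a 0 + b*M/c := by
        have hcd : c * (b*M/c) = b*M := by field_simp
        nlinarith [mul_nonneg (mul_nonneg hc.le he0.le) ha0, hcd]
      linarith
  -- decay bound
  have h2 : ∀ i : ℕ, 1 ≤ i →
      a i ≤ a 0 * (N:ℝ)^2 * (((i:ℝ))^2)⁻¹ + K * (i:ℝ)^(-β) := by
    intro i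
    induction i using Nat.strong_induction_on with
    | _ i IH =>
    intro hi1
    have hx1 : (1:ℝ) ≤ (i:ℝ) := by exact_mod_cast hi1
    by_cases hiN : i ≤ N
    · -- initial segment
      have hNi : (i:ℝ) ≤ (N:ℝ) := by exact_mod_cast hiN
      have hA : (1:ℝ) ≤ (N:ℝ)^2 * (((i:ℝ))^2)⁻¹ := by
        have hi2 : (0:ℝ) < (i:ℝ)^2 := by positivity
        rw [← div_eq_mul_inv, le_div_iff₀ hi2]
        nlinarith
      have hvN : ((N:ℝ))^(-β) ≤ ((i:ℝ))^(-β) := by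
        apply Real.rpow_le_rpow_of_nonpos (by linarith) hNi (by linarith)
      have hNbpos : (0:ℝ) < (N:ℝ)^β := by positivity
      have hB : b*M/c ≤ K * (i:ℝ)^(-β) := by
        have h0 : K * ((N:ℝ))^(-β) = 2*(b*M/c) := by
          rw [hK, Real.rpow_neg (by linarith)]
          field_simp
        have : K * ((N:ℝ))^(-β) ≤ K * (i:ℝ)^(-β) :=
          mul_le_mul_of_nonneg_left hvN hKpos.le
        rw [h0] at this; linarith
      have := h1 i
      have ha0' : a 0 ≤ a 0 * ((N:ℝ)^2 * (((i:ℝ))^2)⁻¹) :=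
        le_mul_of_one_le_right ha0 hA
      calc a i ≤ a 0 + b*M/c := h1 i
        _ ≤ a 0 * ((N:ℝ)^2 * (((i:ℝ))^2)⁻¹) + K * (i:ℝ)^(-β) := by linarith
        _ = a 0 * (N:ℝ)^2 * (((i:ℝ))^2)⁻¹ + K * (i:ℝ)^(-β) := by ring
    · -- inductive step
      push_neg at hiN
      set j : ℕ := i - 1 with hj
      have hj1 : 1 ≤ j := by omega
      have hjN : N ≤ j := by omega
      have hij : j < i := by omega
      have hji : i = j + 1 := by omega
      have IHj := IH j hij hj1
      have hrecI := hrec i hi1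
      have hrj := hr j hj1
      set x : ℝ := (i:ℝ) with hxd
      set y : ℝ := (j:ℝ) with hyd
      have hyx : y = x - 1 := by
        rw [hxd, hyd, hji]; push_cast; ring
      have hy1 : (1:ℝ) ≤ y := by rw [hyd]; exact_mod_cast hj1
      have hx2 : (2:ℝ) ≤ x := by rw [hxd]; exact_mod_cast (by omega : 2 ≤ i)
      have hx0 : (0:ℝ) < x := by linarith
      have hy0 : (0:ℝ) < y := by linarith
      set u : ℝ := x ^ (-β) with hud
      set v : ℝ := y ^ (-β) with hvd
      have hu0 : 0 < u := by rw [hud]; positivity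
      have hv0 : 0 < v := by rw [hvd]; positivity
      have F2 : 2 ≤ c * η * u * x := hthr i (by omega)
      have F3 : v * (x - 1) ≤ u * x := by
        have hd1 : (0:ℝ) < y/x := by positivity
        have hd2 : y/x ≤ 1 := by rw [div_le_one hx0]; linarith
        have hmono := Real.rpow_le_rpow_of_exponent_ge hd1 hd2 hβ2.le
        rw [Real.rpow_one, Real.div_rpow hy0.le hx0.le] at hmono
        have hxb : (0:ℝ) < x^β := by positivity
        have hyb : (0:ℝ) < y^β := by positivity
        rw [div_le_div_iff₀ hx0 hxb] at hmono
        -- hmono : y * x^β ≤ y^β * x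
        have hu' : u = (x^β)⁻¹ := by rw [hud, Real.rpow_neg hx0.le]
        have hv' : v = (y^β)⁻¹ := by rw [hvd, Real.rpow_neg hy0.le]
        rw [hu', hv', ← hyx, inv_mul_eq_div, inv_mul_eq_div,
          div_le_div_iff₀ hyb hxb]
        nlinarith [hmono]
      have F4 : c * (η * u) < 1 := hsmall i hi1
      have hstep : a i ≤ (1 - c*(η*u)) * (a 0 * (N:ℝ)^2 * (y^2)⁻¹ + K*v)
          + b*(η*u)*(M*v) := by
        have hj' : a (i-1) = a j := by rw [hj]
        rw [hj'] at hrecI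
        refine hrecI.trans ?_
        have h1' : (1 - c*(η*u)) * a j ≤ (1 - c*(η*u)) * (a 0 * (N:ℝ)^2 * (y^2)⁻¹ + K*v) :=
          mul_le_mul_of_nonneg_left IHj (by linarith)
        have h2' : b*(η*u)*(r j) ≤ b*(η*u)*(M*v) :=
          mul_le_mul_of_nonneg_left hrj (by positivity)
        linarith
      have parti : (1 - c*(η*u)) * (a 0 * (N:ℝ)^2 * (y^2)⁻¹) ≤ a 0 * (N:ℝ)^2 * (x^2)⁻¹ := by
        have hq : (1 - c*(η*u)) * (y^2)⁻¹ ≤ (x^2)⁻¹ := by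
          rw [← div_eq_mul_inv, inv_eq_one_div, div_le_div_iff₀ (by positivity) (by positivity)]
          nlinarith [mul_le_mul_of_nonneg_right F2 hx0.le, hx2, hyx]
        calc (1 - c*(η*u)) * (a 0 * (N:ℝ)^2 * (y^2)⁻¹)
            = (a 0 * (N:ℝ)^2) * ((1 - c*(η*u)) * (y^2)⁻¹) := by ring
          _ ≤ (a 0 * (N:ℝ)^2) * (x^2)⁻¹ :=
              mul_le_mul_of_nonneg_left hq (by positivity)
          _ = a 0 * (N:ℝ)^2 * (x^2)⁻¹ := by ring
      have partii : (1 - c*(η*u)) * (K*v) + b*(η*u)*(M*v) ≤ K * u := by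
        have P1 : b*M*(η*u*v) ≤ K*c*(η*u*v)/2 := by
          have h0 : (0:ℝ) ≤ η*u*v/2 := by positivity
          nlinarith [mul_le_mul_of_nonneg_right hK2 h0]
        nlinarith [mul_le_mul_of_nonneg_right F2 (le_of_lt (by positivity : (0:ℝ) < K*v/2)),
          mul_le_mul_of_nonneg_left F3 hKpos.le, mul_pos hu0 hv0, hx0, hv0.le, hu0.le]
      calc a i ≤ (1 - c*(η*u)) * (a 0 * (N:ℝ)^2 * (y^2)⁻¹ + K*v) + b*(η*u)*(M*v) := hstep
        _ = (1 - c*(η*u)) * (a 0 * (N:ℝ)^2 * (y^2)⁻¹)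
            + ((1 - c*(η*u)) * (K*v) + b*(η*u)*(M*v)) := by ring
        _ ≤ a 0 * (N:ℝ)^2 * (x^2)⁻¹ + K * u := by linarith
  -- assemble
  intro n hn
  have hn0 : (0:ℝ) < n := by exact_mod_cast hn
  have hsum : ∑ i ∈ Finset.Icc 1 n, a i
      ≤ a 0 * (N:ℝ)^2 * 2 + K * ((n:ℝ)^(1-β)/(1-β)) := by
    have hs1 : ∑ i ∈ Finset.Icc 1 n, a i
        ≤ ∑ i ∈ Finset.Icc 1 n, (a 0 * (N:ℝ)^2 * (((i:ℝ))^2)⁻¹ + K * (i:ℝ)^(-β)) := by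
      apply Finset.sum_le_sum
      intro i hi
      exact h2 i (Finset.mem_Icc.mp hi).1
    rw [Finset.sum_add_distrib, ← Finset.mul_sum, ← Finset.mul_sum] at hs1
    have hs2 := aux_sum_inv_sq n hn
    have hs3 := aux_sum_rpow β hβ0 hβ2 n
    have hinvn : (0:ℝ) ≤ (n:ℝ)⁻¹ := by positivity
    have ht1 : a 0 * (N:ℝ)^2 * (∑ i ∈ Finset.Icc 1 n, (((i:ℝ))^2)⁻¹)
        ≤ a 0 * (N:ℝ)^2 * 2 :=
      mul_le_mul_of_nonneg_left (by linarith) (by positivity)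
    have ht2 : K * (∑ i ∈ Finset.Icc 1 n, (i:ℝ)^(-β)) ≤ K * ((n:ℝ)^(1-β)/(1-β)) :=
      mul_le_mul_of_nonneg_left hs3 hKpos.le
    linarith
  have hpow : (n:ℝ)^(1-β) = (n:ℝ)^(-β) * n := by
    rw [show (1:ℝ)-β = -β + 1 by ring, Real.rpow_add hn0, Real.rpow_one]
  have hdiveq : (a 0 * (N:ℝ)^2 * 2 + K * ((n:ℝ)^(-β) * n/(1-β))) / n
      = 2*(N:ℝ)^2 * (a 0 / n) + (K/(1-β)) * (n:ℝ)^(-β) := by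
    field_simp
  have hmax1 : a 0 / n ≤ max (a 0 / n) ((n:ℝ)^(-β)) := le_max_left _ _
  have hmax2 : (n:ℝ)^(-β) ≤ max (a 0 / n) ((n:ℝ)^(-β)) := le_max_right _ _
  calc (∑ i ∈ Finset.Icc 1 n, a i) / n
      ≤ (a 0 * (N:ℝ)^2 * 2 + K * ((n:ℝ)^(1-β)/(1-β))) / n := by
        gcongr
    _ = 2*(N:ℝ)^2 * (a 0 / n) + (K/(1-β)) * (n:ℝ)^(-β) := by
        rw [hpow]; exact hdiveq
    _ ≤ 2*(N:ℝ)^2 * max (a 0 / n) ((n:ℝ)^(-β)) + (K/(1-β)) * max (a 0 / n) ((n:ℝ)^(-β)) := by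
        have c1 : (0:ℝ) ≤ 2*(N:ℝ)^2 := by positivity
        have c2 : (0:ℝ) ≤ K/(1-β) := by positivity
        have := mul_le_mul_of_nonneg_left hmax1 c1
        have := mul_le_mul_of_nonneg_left hmax2 c2
        linarith
    _ = (2*(N:ℝ)^2 + K/(1-β)) * max (a 0 / n) ((n:ℝ)^(-β)) := by ring
end
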